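/- arXiv:1412.7617 — 2 statements merged into one kernel-verified Lean document; each statement's English description precedes it below -/
import Mathlib

section
/- Let n_1,…,n_I and m_1,…,m_I be positive integers and v_i := \sum_{j=1}^{i}(n_j + m_j) with v_0 = 0. Then \sum_{i=1}^{I} q^{-\sum_{j=1}^{i} n_j}·[m_i]/[1 + n_i + v_{i-1}] · \prod_{j=i+1}^{I} [1 + v_j]/[1 + n_j + v_{j-1}] = q·\prod_{j=1}^{I} [1 + v_j]/[1 + n_j + v_{j-1}] - q^{1 + \sum_{i=1}^{I} m_i}, where [n] is the quantum integer. -/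
open Finset

/-- The quantum integer `[n] = (q^n - q^(-n))/(q - q⁻¹)`. -/
noncomputable def qint {K : Type*} [Field K] (q : K) (n : ℤ) : K :=
  (q ^ n - q ^ (-n)) / (q - q⁻¹)

lemma qint_key {K : Type*} [Field K] (q : K) (hq : q ≠ 0)
    (N M n m : ℤ) :
    q ^ (1 + M) * qint q (1 + (N + M) + n + m) - q ^ (-(N + n)) * qint q m
      = q ^ (1 + M + m) * qint q (1 + n + (N + M)) := by
  simp only [qint, mul_div_assoc']
  rw [div_sub_div_same]
  congr 1
  simp only [mul_sub, ← zpow_add₀ hq]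
  ring_nf

/-- Lemma (lemma-app-16): with `v_i = ∑_{j≤i}(n_j+m_j)`, `v_0 = 0`,
`∑_{i=1}^I q^{-∑_{j≤i}n_j}[m_i]/[1+n_i+v_{i-1}] ∏_{j=i+1}^I [1+v_j]/[1+n_j+v_{j-1}]
  = q ∏_{j=1}^I [1+v_j]/[1+n_j+v_{j-1}] - q^{1+∑ m_i}`. -/
theorem sum_rule_app16 {K : Type*} [Field K] (q : K)
    (hq : q ≠ 0) (hq2 : q ^ 2 ≠ 1)
    (hpos : ∀ n : ℤ, 1 ≤ n → qint q n ≠ 0)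
    (I : ℕ) (m n : ℕ → ℕ)
    (hm : ∀ i ∈ Icc 1 I, 1 ≤ m i) (hn : ∀ i ∈ Icc 1 I, 1 ≤ n i)
    (v : ℕ → ℤ) (hv : ∀ i, v i = ∑ j ∈ Icc 1 i, ((n j : ℤ) + (m j : ℤ))) :
    ∑ i ∈ Icc 1 I,
      q ^ (-∑ j ∈ Icc 1 i, (n j : ℤ)) * qint q (m i) /
          qint q (1 + (n i : ℤ) + v (i - 1)) *
        ∏ j ∈ Icc (i + 1) I, qint q (1 + v j) / qint q (1 + (n j : ℤ) + v (j - 1))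
      = q * (∏ j ∈ Icc 1 I, qint q (1 + v j) / qint q (1 + (n j : ℤ) + v (j - 1))) -
          q ^ (1 + ∑ i ∈ Icc 1 I, (m i : ℤ)) := by
  have hv0 : ∀ i, 0 ≤ v i := fun i => by
    rw [hv]; exact Finset.sum_nonneg fun j _ => by positivity
  induction I with
  | zero => simp
  | succ I ih =>
    have ih' := ih (fun i hi => hm i (Icc_subset_Icc_right (by omega) hi))
      (fun i hi => hn i (Icc_subset_Icc_right (by omega) hi))
    clear ih
    have h1 : (1 : ℕ) ≤ I + 1 := by omega
    rw [Finset.sum_Icc_succ_top h1, Finset.sum_Icc_succ_top h1,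
        Finset.prod_Icc_succ_top h1]
    rw [Finset.sum_congr rfl (fun i hi => by
      rw [Finset.prod_Icc_succ_top (by simp at hi; omega : i + 1 ≤ I + 1), ← mul_assoc])]
    rw [← Finset.sum_mul, ih']
    simp only [Nat.add_sub_cancel, Finset.Icc_self]
    rw [show Finset.Icc (I + 1 + 1) (I + 1) = ∅ from Finset.Icc_eq_empty (by omega)]
    have hNI : v (I + 1) = (∑ j ∈ Icc 1 I, (n j : ℤ)) + (∑ j ∈ Icc 1 I, (m j : ℤ))
        + ((n (I+1) : ℤ) + (m (I+1) : ℤ)) := by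
      rw [hv, Finset.sum_Icc_succ_top h1, Finset.sum_add_distrib]
    have hVI : v I = (∑ j ∈ Icc 1 I, (n j : ℤ)) + (∑ j ∈ Icc 1 I, (m j : ℤ)) := by
      rw [hv, Finset.sum_add_distrib]
    set N := ∑ j ∈ Icc 1 I, (n j : ℤ)
    set M := ∑ j ∈ Icc 1 I, (m j : ℤ)
    have hD : qint q (1 + (n (I+1) : ℤ) + v I) ≠ 0 := by
      apply hpos
      have := hv0 I
      have : (0:ℤ) ≤ (n (I+1) : ℤ) := Int.natCast_nonneg _
      omega
    have key : q ^ (1 + M) * qint q (1 + v (I+1)) - q ^ (-(N + (n (I+1):ℤ))) * qint q (m (I+1))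
        = q ^ (1 + M + (m (I+1):ℤ)) * qint q (1 + (n (I+1):ℤ) + v I) := by
      rw [show (1:ℤ) + v (I+1) = 1 + (N+M) + (n (I+1):ℤ) + (m (I+1):ℤ) by rw [hNI]; ring,
          show (1:ℤ) + (n (I+1):ℤ) + v I = 1 + (n (I+1):ℤ) + (N+M) by rw [hVI]]
      exact qint_key q hq N M (n (I+1)) (m (I+1))
    set D := qint q (1 + (n (I+1):ℤ) + v I) with hDdef
    have key3 : q ^ (1 + M) * (qint q (1 + v (I+1)) / D)
        - q ^ (-(N + (n (I+1):ℤ))) * qint q (m (I+1)) / D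
        = q ^ (1 + M + (m (I+1):ℤ)) := by
      field_simp [hD]
      linear_combination (norm := (rw [show -(N + (n (I+1):ℤ)) = -(n (I+1):ℤ) - N from by ring] at key ⊢ <;> ring_nf)) key
    rw [Finset.sum_Icc_succ_top h1]
    simp only [Finset.prod_empty, mul_one, Nat.add_sub_cancel]
    rw [show (1:ℤ) + (∑ k ∈ Icc 1 I, (m k : ℤ) + (m (I+1):ℤ)) = 1 + M + (m (I+1):ℤ) from by push_cast; ring]
    linear_combination -key3
end

section
/- Let x be a positive integer, z a nonnegative integer, and m_1,…,m_K positive integers. Define I_i := \prod_{j=1}^{i} [2 + 2z + 2\sum_{k=j}^{K} m_k] / [2 + 2z + m_j + 2\sum_{k=j+1}^{K} m_k] and J_i := [m_i]·[x + 3 + 2z + \sum_{j=1}^{i} m_j + 2\sum_{j=i+1}^{K} m_j] / ([1 + x + \sum_{j=1}^{i-1} m_j]·[1 + x + \sum_{j=1}^{i} m_j]). Then \sum_{i=1}^{K} I_i·J_i + ([2z+2]/[1 + x + \sum_{i=1}^{K} m_i])·I_K = [2 + 2z + 2\sum_{i=1}^{K} m_i] / [1 + x], where [n] is the quantum integer.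 -/
open Finset

lemma qint_key_s16 {K' : Type*} [Field K'] (q : K') (hq : q ≠ 0)
    (a b c : ℤ) :
    qint q (a+c) * qint q (b+c) - qint q a * qint q b = qint q c * qint q (a+b+c) := by
  have ha := zpow_ne_zero a hq
  have hb := zpow_ne_zero b hq
  have hc := zpow_ne_zero c hq
  have num : (q^(a+c)-q^(-(a+c)))*(q^(b+c)-q^(-(b+c))) - (q^a-q^(-a))*(q^b-q^(-b))
      = (q^c-q^(-c))*(q^(a+b+c)-q^(-(a+b+c))) := by
    simp only [zpow_add₀ hq, zpow_neg, neg_add]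
    field_simp
    ring
  simp only [qint, div_mul_div_comm, ← sub_div]
  rw [num]

lemma qint_step {K' : Type*} [Field K'] (q : K') (hq : q ≠ 0)
    (a b c : ℤ) (hac : qint q (a+c) ≠ 0) (hb : qint q b ≠ 0) (hbc : qint q (b+c) ≠ 0) :
    qint q (a+2*c) / qint q (a+c) * (qint q c * qint q (a+b+c) / (qint q b * qint q (b+c)))
    = qint q (a+2*c) / qint q b - qint q (a+2*c) / qint q (a+c) * (qint q a / qint q (b+c)) := by
  field_simp
  linear_combination -qint q (a+2*c) * qint_key_s16 q hq a b c

/-- Lemma (lemma-app-13): with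
`I_i = ∏_{j≤i} [2+2z+2∑_{k≥j}m_k]/[2+2z+m_j+2∑_{k>j}m_k]` and
`J_i = [m_i][x+3+2z+∑_{j≤i}m_j+2∑_{j>i}m_j]/([1+x+∑_{j<i}m_j][1+x+∑_{j≤i}m_j])`,
`∑_{i=1}^K I_i·J_i + [2z+2]/[1+x+∑ m_i]·I_K = [2+2z+2∑ m_i]/[1+x]`. -/
theorem sum_rule_app13 {K' : Type*} [Field K'] (q : K')
    (hq : q ≠ 0) (hq2 : q ^ 2 ≠ 1)
    (hpos : ∀ n : ℤ, 1 ≤ n → qint q n ≠ 0)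
    (x : ℤ) (hx : 1 ≤ x) (z : ℕ) (K : ℕ) (m : ℕ → ℕ)
    (hm : ∀ i ∈ Icc 1 K, 1 ≤ m i)
    (Ifun Jfun : ℕ → K')
    (hI : ∀ i, Ifun i =
      ∏ j ∈ Icc 1 i,
        qint q (2 + 2 * (z : ℤ) + 2 * ∑ k ∈ Icc j K, (m k : ℤ)) /
          qint q (2 + 2 * (z : ℤ) + (m j : ℤ) + 2 * ∑ k ∈ Icc (j + 1) K, (m k : ℤ)))
    (hJ : ∀ i, Jfun i =
      qint q (m i) *
        qint q (x + 3 + 2 * (z : ℤ) + (∑ j ∈ Icc 1 i, (m j : ℤ)) +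
          2 * ∑ j ∈ Icc (i + 1) K, (m j : ℤ)) /
        (qint q (1 + x + ∑ j ∈ Icc 1 (i - 1), (m j : ℤ)) *
          qint q (1 + x + ∑ j ∈ Icc 1 i, (m j : ℤ)))) :
    (∑ i ∈ Icc 1 K, Ifun i * Jfun i) +
      qint q (2 * (z : ℤ) + 2) / qint q (1 + x + ∑ i ∈ Icc 1 K, (m i : ℤ)) * Ifun K
      = qint q (2 + 2 * (z : ℤ) + 2 * ∑ i ∈ Icc 1 K, (m i : ℤ)) / qint q (1 + x) := by
  have hznn : (0:ℤ) ≤ (z:ℤ) := Int.natCast_nonneg _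
  set g : ℕ → K' := fun i =>
    Ifun i * (qint q (2 + 2 * (z : ℤ) + 2 * ∑ k ∈ Icc (i + 1) K, (m k : ℤ)) /
      qint q (1 + x + ∑ j ∈ Icc 1 i, (m j : ℤ))) with hg
  have key : ∀ n, n < K → Ifun (n+1) * Jfun (n+1) = g n - g (n+1) := by
    intro n hn
    have h1 : (1:ℕ) ≤ n + 1 := Nat.succ_le_succ (Nat.zero_le n)
    have hTsum : ∑ k ∈ Icc (n+1) K, (m k:ℤ)
        = (m (n+1):ℤ) + ∑ k ∈ Icc (n+1+1) K, (m k:ℤ) := by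
      have hsplit : Icc (n+1) K = insert (n+1) (Icc (n+1+1) K) := by
        ext a; simp only [Finset.mem_Icc, Finset.mem_insert]; omega
      rw [hsplit, Finset.sum_insert (by simp)]
    have hSsum : ∑ j ∈ Icc 1 (n+1), (m j:ℤ)
        = (∑ j ∈ Icc 1 n, (m j:ℤ)) + (m (n+1):ℤ) := Finset.sum_Icc_succ_top h1 _
    have hIfun : Ifun (n+1) = Ifun n *
        (qint q (2 + 2*(z:ℤ) + 2 * ∑ k ∈ Icc (n+1) K, (m k:ℤ)) /
         qint q (2 + 2*(z:ℤ) + (m (n+1):ℤ) + 2 * ∑ k ∈ Icc (n+1+1) K, (m k:ℤ))) := by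
      rw [hI (n+1), hI n, Finset.prod_Icc_succ_top h1]
    simp only [hg]
    rw [hJ (n+1), hIfun]
    norm_num
    rw [hTsum, hSsum]
    set T := ∑ k ∈ Icc (n+1+1) K, (m k:ℤ) with hT
    set Sn := ∑ j ∈ Icc 1 n, (m j:ℤ) with hSn
    set c := ((m (n+1)):ℤ) with hc
    have hTnn : (0:ℤ) ≤ T := by
      rw [hT]; exact Finset.sum_nonneg fun _ _ => Int.natCast_nonneg _
    have hSnn : (0:ℤ) ≤ Sn := by
      rw [hSn]; exact Finset.sum_nonneg fun _ _ => Int.natCast_nonneg _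
    have hcnn : (0:ℤ) ≤ c := by rw [hc]; exact Int.natCast_nonneg _
    have hac : qint q ((2 + 2*(z:ℤ) + 2*T) + c) ≠ 0 := hpos _ (by linarith)
    have hb : qint q (1 + x + Sn) ≠ 0 := hpos _ (by linarith)
    have hbc : qint q ((1 + x + Sn) + c) ≠ 0 := hpos _ (by linarith)
    rw [show (2 + 2*(z:ℤ) + 2*(c + T)) = (2 + 2*(z:ℤ) + 2*T) + 2*c by ring]
    rw [show (2 + 2*(z:ℤ) + c + 2*T) = (2 + 2*(z:ℤ) + 2*T) + c by ring]
    rw [show (x + 3 + 2*(z:ℤ) + (Sn + c) + 2*T)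
        = (2 + 2*(z:ℤ) + 2*T) + (1 + x + Sn) + c by ring]
    rw [show ((1:ℤ) + x + (Sn + c)) = (1 + x + Sn) + c by ring]
    linear_combination Ifun n * qint_step q hq (2 + 2*(z:ℤ) + 2*T) (1 + x + Sn) c hac hb hbc
  have hsum : ∑ i ∈ Icc 1 K, Ifun i * Jfun i = g 0 - g K := by
    rw [← Finset.Ico_add_one_right_eq_Icc, Finset.sum_Ico_eq_sum_range]
    norm_num
    rw [← Finset.sum_range_sub' g K]
    refine Finset.sum_congr rfl fun i hi => ?_
    rw [Nat.add_comm 1 i]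
    exact key i (Finset.mem_range.mp hi)
  rw [hsum]
  simp only [hg]
  rw [hI 0]
  rw [show Icc 1 0 = (∅ : Finset ℕ) from Finset.Icc_eq_empty (by omega)]
  rw [show Icc (K+1) K = (∅ : Finset ℕ) from Finset.Icc_eq_empty (by omega)]
  simp only [Finset.prod_empty, Finset.sum_empty, one_mul, add_zero, mul_zero]
  rw [show (2 + 2*(z:ℤ)) = 2*(z:ℤ) + 2 by ring]
  norm_num
  ring
end
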